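/- Let λ₁, λ₂ be nonzero scalars with λ₁² − λ₁λ₂ + λ₂² ≠ 0, and let A = [[λ₁, λ₁], [0, λ₂]], B = [[λ₂, 0], [−λ₂, λ₁]]. Then the subalgebra generated by A and B is the full 2×2 matrix algebra; equivalently, the representation of B₃ defined by σ₁ ↦ A, σ₂ ↦ B is irreducible. -/

import Mathlib

lemma span_two_aux {K : Type*} [Field K] (W : Submodule K (Fin 2 → K))
    (u w : Fin 2 → K) (hu : u ∈ W) (hw : w ∈ W)
    (hd : u 0 * w 1 - u 1 * w 0 ≠ 0) : W = ⊤ := by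
  rw [eq_top_iff]
  rintro z -
  have hz : z = ((z 0 * w 1 - z 1 * w 0) / (u 0 * w 1 - u 1 * w 0)) • u
      + ((u 0 * z 1 - u 1 * z 0) / (u 0 * w 1 - u 1 * w 0)) • w := by
    funext i
    fin_cases i <;>
      · simp only [Pi.add_apply, Pi.smul_apply, smul_eq_mul, Fin.zero_eta, Fin.mk_one]
        field_simp
        have hd' : w 1 * u 0 - w 0 * u 1 ≠ 0 := by intro h; apply hd; linear_combination h
        field_simp [hd']
        ring
  rw [hz]
  exact W.add_mem (W.smul_mem _ hu) (W.smul_mem _ hw)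

theorem braid_dim2_irreducible {K : Type*} [Field K] [IsAlgClosed K]
    (l1 l2 : K) (h1 : l1 ≠ 0) (h2 : l2 ≠ 0) (hQ : l1 ^ 2 - l1 * l2 + l2 ^ 2 ≠ 0) :
    let A : Matrix (Fin 2) (Fin 2) K := !![l1, l1; 0, l2]
    let B : Matrix (Fin 2) (Fin 2) K := !![l2, 0; -l2, l1]
    ∀ W : Submodule K (Fin 2 → K),
      (∀ v ∈ W, A.mulVec v ∈ W) → (∀ v ∈ W, B.mulVec v ∈ W) → W = ⊥ ∨ W = ⊤ := by
  intro A B W hA hB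
  by_cases hbot : W = ⊥
  · exact Or.inl hbot
  right
  obtain ⟨v, hvW, hv0⟩ := (Submodule.ne_bot_iff W).mp hbot
  set x := v 0 with hxdef
  set y := v 1 with hydef
  have hAv : A.mulVec v = ![l1 * x + l1 * y, l2 * y] := by
    funext i
    fin_cases i <;>
      simp [A, x, y, Matrix.mulVec, dotProduct, Fin.sum_univ_two]
  have hBv : B.mulVec v = ![l2 * x, -l2 * x + l1 * y] := by
    funext i
    fin_cases i <;>
      simp [B, x, y, Matrix.mulVec, dotProduct, Fin.sum_univ_two]
  have hAW : (![l1 * x + l1 * y, l2 * y] : Fin 2 → K) ∈ W := hAv ▸ hA v hvW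
  have hBW : (![l2 * x, -l2 * x + l1 * y] : Fin 2 → K) ∈ W := hBv ▸ hB v hvW
  by_cases hdA : x * (l2 * y) - y * (l1 * x + l1 * y) = 0
  · by_cases hdB : x * (-l2 * x + l1 * y) - y * (l2 * x) = 0
    · exfalso
      by_cases hx : x = 0
      · have hy : y ≠ 0 := by
          intro hy
          apply hv0
          funext i
          fin_cases i
          · exact hx
          · exact hy
        apply h1
        have : l1 * (y * y) = 0 := by
          rw [hx] at hdA; linear_combination -hdA
        rcases mul_eq_zero.mp this with h | h
        · exact h
        · exact absurd h (mul_ne_zero hy hy)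
      · by_cases hy : y = 0
        · apply h2
          have : l2 * (x * x) = 0 := by
            rw [hy] at hdB; linear_combination -hdB
          rcases mul_eq_zero.mp this with h | h
          · exact h
          · exact absurd h (mul_ne_zero hx hx)
        · -- x ≠ 0, y ≠ 0
          have hP : (l1 - l2) * x + l1 * y = 0 := by
            have : y * ((l1 - l2) * x + l1 * y) = 0 := by linear_combination -hdA
            rcases mul_eq_zero.mp this with h | h
            · exact absurd h hy
            · exact h
          have hQ' : l2 * x + (l2 - l1) * y = 0 := by
            have : x * (l2 * x + (l2 - l1) * y) = 0 := by linear_combination -hdB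
            rcases mul_eq_zero.mp this with h | h
            · exact absurd h hx
            · exact h
          have hS : (l1 ^ 2 - l1 * l2 + l2 ^ 2) * x = 0 := by
            linear_combination (l1 - l2) * hP + l1 * hQ'
          rcases mul_eq_zero.mp hS with h | h
          · exact hQ h
          · exact hx h
    · refine span_two_aux W v _ hvW hBW ?_
      simpa using hdB
  · refine span_two_aux W v _ hvW hAW ?_
    simpa using hdA
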